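/- Consider colour refinement on regular cell complexes where the full update is a^{t+1}_σ = HASH(a^t_σ, a^t_B(σ), a^t_C(σ), a^t_↓(σ), a^t_↑(σ)) and the restricted update is b^{t+1}_σ = HASH'(b^t_σ, b^t_B(σ), b^t_↓(σ), b^t_↑(σ)), both starting from constant colourings with injective hash functions. Then for all t, the colouring b^{t+1} refines a^t: for any cells σ, τ in any complexes, b^{t+1}_σ = b^{t+1}_τ implies a^t_σ = a^t_τ. -/

import Mathlib

/-- A combinatorial model of a (regular) cell complex: a finite set of cells
with a covering (boundary) relation `covers σ τ` meaning "σ ≺ τ". -/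
structure CC where
  Cell : Type
  fin : Fintype Cell
  deq : DecidableEq Cell
  covers : Cell → Cell → Prop
  dec : DecidableRel covers

attribute [instance] CC.fin CC.deq CC.dec

/-- The boundary `B(σ) = {τ | τ ≺ σ}`. -/
def CC.bd (X : CC) (σ : X.Cell) : Finset X.Cell :=
  Finset.univ.filter (fun τ => X.covers τ σ)

/-- The coboundary `C(σ) = {τ | σ ≺ τ}`. -/
def CC.cobd (X : CC) (σ : X.Cell) : Finset X.Cell :=
  Finset.univ.filter (fun τ => X.covers σ τ)

/-- Multiset of colours of the boundary cells of `σ`. -/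
def cB {Colour : Type} (X : CC) (c : X.Cell → Colour) (σ : X.Cell) : Multiset Colour :=
  (X.bd σ).val.map c

/-- Multiset of colours of the coboundary cells of `σ`. -/
def cC {Colour : Type} (X : CC) (c : X.Cell → Colour) (σ : X.Cell) : Multiset Colour :=
  (X.cobd σ).val.map c

/-- Upper-adjacency colour multiset: pairs `(c τ, c δ)` over `τ ∈ N↑(σ)`,
`δ ∈ C(σ) ∩ C(τ)`, i.e. pairs `(τ, δ)` with `σ ≺ δ` and `τ ≺ δ`. -/
def cUp {Colour : Type} (X : CC) (c : X.Cell → Colour) (σ : X.Cell) :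
    Multiset (Colour × Colour) :=
  ((Finset.univ ×ˢ Finset.univ).filter
    (fun p : X.Cell × X.Cell => X.covers σ p.2 ∧ X.covers p.1 p.2)).val.map
      (fun p => (c p.1, c p.2))

/-- Lower-adjacency colour multiset: pairs `(c τ, c δ)` over `τ ∈ N↓(σ)`,
`δ ∈ B(σ) ∩ B(τ)`, i.e. pairs `(τ, δ)` with `δ ≺ σ` and `δ ≺ τ`. -/
def cDown {Colour : Type} (X : CC) (c : X.Cell → Colour) (σ : X.Cell) :
    Multiset (Colour × Colour) :=
  ((Finset.univ ×ˢ Finset.univ).filter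
    (fun p : X.Cell × X.Cell => X.covers p.2 σ ∧ X.covers p.2 p.1)).val.map
      (fun p => (c p.1, c p.2))

/-- Colour histogram of a complex. -/
def histo {Colour : Type} (X : CC) (c : X.Cell → Colour) : Multiset Colour :=
  Finset.univ.val.map c

/-- CWL with the complete set of adjacencies: constant initialisation and
injective-hash update `c^{t+1}_σ = HASH(c^t_σ, c_B, c_C, c_↓, c_↑)`, captured by
the iff (determinism + injectivity of the hash). -/
def IsCWLFull {Colour : Type} (c : ∀ X : CC, ℕ → X.Cell → Colour) : Prop :=
  (∀ (X Y : CC) (σ : X.Cell) (τ : Y.Cell), c X 0 σ = c Y 0 τ) ∧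
  (∀ (X Y : CC) (σ : X.Cell) (τ : Y.Cell) (t : ℕ),
    c X (t + 1) σ = c Y (t + 1) τ ↔
      (c X t σ = c Y t τ ∧ cB X (c X t) σ = cB Y (c Y t) τ ∧
        cC X (c X t) σ = cC Y (c Y t) τ ∧
        cDown X (c X t) σ = cDown Y (c Y t) τ ∧
        cUp X (c X t) σ = cUp Y (c Y t) τ))

/-- CWL without coboundary adjacencies:
`c^{t+1}_σ = HASH(c^t_σ, c_B, c_↓, c_↑)`. -/
def IsCWLNoCobd {Colour : Type} (c : ∀ X : CC, ℕ → X.Cell → Colour) : Prop :=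
  (∀ (X Y : CC) (σ : X.Cell) (τ : Y.Cell), c X 0 σ = c Y 0 τ) ∧
  (∀ (X Y : CC) (σ : X.Cell) (τ : Y.Cell) (t : ℕ),
    c X (t + 1) σ = c Y (t + 1) τ ↔
      (c X t σ = c Y t τ ∧ cB X (c X t) σ = cB Y (c Y t) τ ∧
        cDown X (c X t) σ = cDown Y (c Y t) τ ∧
        cUp X (c X t) σ = cUp Y (c Y t) τ))

/-- CWL with only boundary and upper adjacencies:
`c^{t+1}_σ = HASH(c^t_σ, c_B, c_↑)`. -/
def IsCWLBU {Colour : Type} (c : ∀ X : CC, ℕ → X.Cell → Colour) : Prop :=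
  (∀ (X Y : CC) (σ : X.Cell) (τ : Y.Cell), c X 0 σ = c Y 0 τ) ∧
  (∀ (X Y : CC) (σ : X.Cell) (τ : Y.Cell) (t : ℕ),
    c X (t + 1) σ = c Y (t + 1) τ ↔
      (c X t σ = c Y t τ ∧ cB X (c X t) σ = cB Y (c Y t) τ ∧
        cUp X (c X t) σ = cUp Y (c Y t) τ))

/-- Refinement transfer for multiset images: if two multisets have equal images
under `c1`/`c2` and `f1`/`f2` refine `c1`/`c2`, the `f`-images agree. -/
lemma map_refine {α β C C' : Type} {s : Multiset α} {t : Multiset β}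
    {c1 : α → C'} {c2 : β → C'} {f1 : α → C} {f2 : β → C}
    (h : s.map c1 = t.map c2)
    (hr : ∀ x y, c1 x = c2 y → f1 x = f2 y) :
    s.map f1 = t.map f2 := by
  rw [← Multiset.rel_eq] at h ⊢
  rw [Multiset.rel_map] at h ⊢
  exact h.mono (fun x _ y _ h' => hr x y h')

lemma card_filter_pair (X : CC) (R : X.Cell → Prop) [DecidablePred R] :
    ((Finset.univ ×ˢ Finset.univ).filter
      (fun p : X.Cell × X.Cell => R p.2 ∧ X.covers p.1 p.2)).card
    = ∑ δ ∈ Finset.univ.filter R, (X.bd δ).card := by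
  classical
  rw [Finset.card_filter, Finset.sum_product, Finset.sum_comm, Finset.sum_filter]
  refine Finset.sum_congr rfl (fun δ _ => ?_)
  by_cases h : R δ
  · simp only [h, true_and, if_true]
    rw [CC.bd, Finset.card_filter]
  · simp [h]

lemma count_cUp {Colour' : Type} [DecidableEq Colour'] (X : CC)
    (c : X.Cell → Colour') (σ : X.Cell) (y : Colour') :
    Multiset.count y ((cUp X c σ).map Prod.snd)
      = ∑ δ ∈ (X.cobd σ).filter (fun δ => c δ = y), (X.bd δ).card := by
  classical
  rw [cUp, Multiset.map_map]
  have : (Prod.snd ∘ fun p : X.Cell × X.Cell => (c p.1, c p.2)) = fun p => c p.2 := rfl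
  rw [this, Multiset.count_map]
  have h1 : Multiset.filter (fun p : X.Cell × X.Cell => y = c p.2)
      ((Finset.univ ×ˢ Finset.univ).filter
        (fun p : X.Cell × X.Cell => X.covers σ p.2 ∧ X.covers p.1 p.2)).val
      = (((Finset.univ ×ˢ Finset.univ).filter
        (fun p : X.Cell × X.Cell =>
          (X.covers σ p.2 ∧ c p.2 = y) ∧ X.covers p.1 p.2))).val := by
    rw [← Finset.filter_val, Finset.filter_filter]
    congr 1
    apply Finset.filter_congr
    intro p _
    constructor
    · rintro ⟨⟨h1, h2⟩, h3⟩; exact ⟨⟨h1, h3.symm⟩, h2⟩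
    · rintro ⟨⟨h1, h3⟩, h2⟩; exact ⟨⟨h1, h2⟩, h3.symm⟩
  rw [h1]
  have h2 := card_filter_pair X (fun δ => X.covers σ δ ∧ c δ = y)
  have h3 : Finset.univ.filter (fun δ => X.covers σ δ ∧ c δ = y)
      = (X.cobd σ).filter (fun δ => c δ = y) := by
    ext δ; simp [CC.cobd, Finset.filter_filter]
  rw [← h3, ← h2]
  rfl

/-- Positivity of boundary size for coboundary cells. -/
lemma bd_card_pos {X : CC} {σ δ : X.Cell} (h : δ ∈ X.cobd σ) : 0 < (X.bd δ).card := by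
  have hσ : σ ∈ X.bd δ := by
    simp only [CC.cobd, Finset.mem_filter] at h
    simp [CC.bd, h.2]
  exact Finset.card_pos.mpr ⟨σ, hσ⟩

/-- Recovering the coboundary colour multiset from the upper-adjacency multiset,
given that colours determine boundary sizes. -/
lemma cobd_map_eq {Colour' : Type} [DecidableEq Colour'] {X Y : CC}
    {c1 : X.Cell → Colour'} {c2 : Y.Cell → Colour'} {σ : X.Cell} {τ : Y.Cell}
    (hU : cUp X c1 σ = cUp Y c2 τ)
    (hXY : ∀ (δ : X.Cell) (δ' : Y.Cell), c1 δ = c2 δ' → (X.bd δ).card = (Y.bd δ').card)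
    (hXX : ∀ δ δ' : X.Cell, c1 δ = c1 δ' → (X.bd δ).card = (X.bd δ').card)
    (hYY : ∀ δ δ' : Y.Cell, c2 δ = c2 δ' → (Y.bd δ).card = (Y.bd δ').card) :
    (X.cobd σ).val.map c1 = (Y.cobd τ).val.map c2 := by
  refine Multiset.ext.mpr (fun y => ?_)
  have hsum : ∑ δ ∈ (X.cobd σ).filter (fun δ => c1 δ = y), (X.bd δ).card
      = ∑ δ ∈ (Y.cobd τ).filter (fun δ => c2 δ = y), (Y.bd δ).card := by
    rw [← count_cUp, ← count_cUp, hU]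
  set S1 := (X.cobd σ).filter (fun δ => c1 δ = y) with hS1
  set S2 := (Y.cobd τ).filter (fun δ => c2 δ = y) with hS2
  have hcount1 : Multiset.count y ((X.cobd σ).val.map c1) = S1.card := by
    rw [Multiset.count_map,
      Multiset.filter_congr (fun a _ => (eq_comm : y = c1 a ↔ c1 a = y))]
    rfl
  have hcount2 : Multiset.count y ((Y.cobd τ).val.map c2) = S2.card := by
    rw [Multiset.count_map,
      Multiset.filter_congr (fun a _ => (eq_comm : y = c2 a ↔ c2 a = y))]
    rfl
  rw [hcount1, hcount2]
  rcases S1.eq_empty_or_nonempty with h1 | ⟨δ0, hδ0⟩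
  · rw [h1, Finset.sum_empty] at hsum
    have h2 : S2 = ∅ := by
      by_contra h2
      obtain ⟨δ', hδ'⟩ := Finset.nonempty_of_ne_empty h2
      have := Finset.sum_eq_zero_iff.mp hsum.symm δ' hδ'
      have hpos : 0 < (Y.bd δ').card :=
        bd_card_pos (Finset.mem_of_mem_filter δ' hδ')
      omega
    rw [h1, h2]
    rfl
  · have hδ0' := Finset.mem_filter.mp hδ0
    set n := (X.bd δ0).card with hn
    have hsum1 : ∑ δ ∈ S1, (X.bd δ).card = S1.card * n := by
      rw [Finset.sum_congr rfl (fun δ hδ => hXX δ δ0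
        (((Finset.mem_filter.mp hδ).2).trans hδ0'.2.symm))]
      simp [Finset.sum_const, Nat.mul_comm, hn]
    have hsum2 : ∑ δ ∈ S2, (Y.bd δ).card = S2.card * n := by
      rw [Finset.sum_congr rfl (fun δ hδ => ((hXY δ0 δ
        (hδ0'.2.trans ((Finset.mem_filter.mp hδ).2).symm)).symm))]
      simp [Finset.sum_const, Nat.mul_comm, hn]
    rw [hsum1, hsum2] at hsum
    have hnpos : 0 < n := bd_card_pos hδ0'.1
    exact Nat.eq_of_mul_eq_mul_right hnpos hsum

/-- With `a` the CWL colouring using the full update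
(`HASH(a, a_B, a_C, a_↓, a_↑)`) and `b` the restricted one dropping the
coboundary multiset (`HASH'(b, b_B, b_↓, b_↑)`), both from constant
initialisations with injective hashes, `b^{t+1}` refines `a^t`. -/
theorem stmt_3 {Colour Colour' : Type}
    (a : ∀ X : CC, ℕ → X.Cell → Colour) (b : ∀ X : CC, ℕ → X.Cell → Colour')
    (ha : IsCWLFull a) (hb : IsCWLNoCobd b) :
    ∀ (t : ℕ) (X Y : CC) (σ : X.Cell) (τ : Y.Cell),
      b X (t + 1) σ = b Y (t + 1) τ → a X t σ = a Y t τ := by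
  classical
  have hcard : ∀ (t : ℕ) (X Y : CC) (σ : X.Cell) (τ : Y.Cell),
      b X (t + 1) σ = b Y (t + 1) τ → (X.bd σ).card = (Y.bd τ).card := by
    intro t X Y σ τ h
    have hB := ((hb.2 X Y σ τ t).mp h).2.1
    have hc := congrArg Multiset.card hB
    simpa [cB] using hc
  intro t
  induction t with
  | zero => intro X Y σ τ _; exact ha.1 X Y σ τ
  | succ t ih =>
    intro X Y σ τ h
    obtain ⟨h0, hB, hD, hU⟩ := (hb.2 X Y σ τ (t + 1)).mp h
    refine (ha.2 X Y σ τ t).mpr ⟨ih X Y σ τ h0, ?_, ?_, ?_, ?_⟩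
    · exact map_refine hB (fun x y hxy => ih X Y x y hxy)
    · have hmid := cobd_map_eq hU (fun δ δ' h' => hcard t X Y δ δ' h')
        (fun δ δ' h' => hcard t X X δ δ' h') (fun δ δ' h' => hcard t Y Y δ δ' h')
      exact map_refine hmid (fun x y hxy => ih X Y x y hxy)
    · exact map_refine hD (fun p q hpq => by
        simp only [Prod.mk.injEq] at hpq ⊢
        exact ⟨ih X Y _ _ hpq.1, ih X Y _ _ hpq.2⟩)
    · exact map_refine hU (fun p q hpq => by
        simp only [Prod.mk.injEq] at hpq ⊢
        exact ⟨ih X Y _ _ hpq.1, ih X Y _ _ hpq.2⟩)
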